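/- Let n ≥ 2 and ρ > 0, and suppose a bounded open set Ω ⊂ ℝ^n satisfies ρ-reflection. Then sup_{x ∈ ∂Ω} |x| − inf_{x ∈ ∂Ω} |x| ≤ 4ρ. -/

import Mathlib

open MeasureTheory Metric Set
open scoped ENNReal RealInnerProductSpace

noncomputable section

/-- `Ω` satisfies `ρ`-reflection: it contains `B̄_ρ(0)` and for every unit direction `ν`
and every `s > ρ`, the reflection across the hyperplane `{x·ν = s}` maps
`Ω ∩ {x·ν > s}` into `Ω ∩ {x·ν < s}`. -/
def RhoReflection (n : ℕ) (ρ : ℝ) (Ω : Set (EuclideanSpace ℝ (Fin n))) : Prop :=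
  closedBall (0 : EuclideanSpace ℝ (Fin n)) ρ ⊆ Ω ∧
    ∀ ν : EuclideanSpace ℝ (Fin n), ‖ν‖ = 1 → ∀ s : ℝ, ρ < s →
      (fun x => x - (2 * ⟪x - s • ν, ν⟫) • ν) '' (Ω ∩ {x | s < ⟪x, ν⟫}) ⊆
        Ω ∩ {x | ⟪x, ν⟫ < s}

/-- If a bounded open set `Ω ⊆ ℝ^n` satisfies `ρ`-reflection, then
`sup_{x ∈ ∂Ω} |x| - inf_{x ∈ ∂Ω} |x| ≤ 4ρ`. -/
theorem statement8 (n : ℕ) (hn : 2 ≤ n) (ρ : ℝ) (hρ : 0 < ρ)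
    (Ω : Set (EuclideanSpace ℝ (Fin n))) (hopen : IsOpen Ω)
    (hbdd : Bornology.IsBounded Ω) (hrefl : RhoReflection n ρ Ω) :
    sSup ((fun x => ‖x‖) '' frontier Ω) - sInf ((fun x => ‖x‖) '' frontier Ω) ≤ 4 * ρ := by
  obtain ⟨hball, hrefl2⟩ := hrefl
  -- points outside Ω have norm > ρ
  have hout_norm : ∀ p : EuclideanSpace ℝ (Fin n), p ∉ Ω → ρ < ‖p‖ := by
    intro p hp
    by_contra h
    push_neg at h
    exact hp (hball (mem_closedBall_zero_iff.mpr h))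
  -- ray lemma: if p ∉ Ω then all points t • (‖p‖⁻¹ • p) with t > ‖p‖ are not in Ω
  have hray : ∀ p : EuclideanSpace ℝ (Fin n), p ∉ Ω → ∀ t : ℝ, ‖p‖ < t →
      t • ((‖p‖⁻¹ : ℝ) • p) ∉ Ω := by
    intro p hpΩ t ht htmem
    have hpρ : ρ < ‖p‖ := hout_norm p hpΩ
    have hr0 : (0 : ℝ) < ‖p‖ := hρ.trans hpρ
    have hp0 : p ≠ 0 := norm_pos_iff.mp hr0
    obtain ⟨ν, hνdef⟩ : ∃ v : EuclideanSpace ℝ (Fin n), v = (‖p‖⁻¹ : ℝ) • p := ⟨_, rfl⟩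
    rw [← hνdef] at htmem
    have hνnorm : ‖ν‖ = 1 := by rw [hνdef]; exact norm_smul_inv_norm hp0
    have hνν : ⟪ν, ν⟫ = 1 := by
      rw [real_inner_self_eq_norm_sq, hνnorm]; norm_num
    have hpν : (‖p‖ : ℝ) • ν = p := by
      rw [hνdef, smul_smul, mul_inv_cancel₀ hr0.ne', one_smul]
    obtain ⟨s, hs⟩ : ∃ s : ℝ, s = (t + ‖p‖) / 2 := ⟨_, rfl⟩
    have hρs : ρ < s := by rw [hs]; linarith
    have hst : s < t := by rw [hs]; linarith
    have hmem : t • ν ∈ Ω ∩ {x | s < ⟪x, ν⟫} := by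
      refine ⟨htmem, ?_⟩
      simp only [mem_setOf_eq, real_inner_smul_left, hνν, mul_one]
      exact hst
    have himg := hrefl2 ν hνnorm s hρs (mem_image_of_mem _ hmem)
    have hcalc : t • ν - (2 * ⟪t • ν - s • ν, ν⟫) • ν = p := by
      rw [inner_sub_left, real_inner_smul_left, real_inner_smul_left, hνν, mul_one, mul_one,
        ← sub_smul]
      rw [show t - 2 * (t - s) = ‖p‖ by rw [hs]; ring]
      exact hpν
    rw [hcalc] at himg
    exact hpΩ himg.1
  -- main lemma: every z ∈ Ω satisfies ‖z‖ ≤ ‖p‖ + 2ρ, for any p ∉ Ω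
  have hmain : ∀ p : EuclideanSpace ℝ (Fin n), p ∉ Ω → ∀ z ∈ Ω, ‖z‖ ≤ ‖p‖ + 2 * ρ := by
    intro p hpΩ z hz
    by_contra hlt
    push_neg at hlt
    have hpρ : ρ < ‖p‖ := hout_norm p hpΩ
    have hr0 : (0 : ℝ) < ‖p‖ := hρ.trans hpρ
    have hp0 : p ≠ 0 := norm_pos_iff.mp hr0
    obtain ⟨t, htd⟩ : ∃ t : ℝ, t = (‖p‖ + ‖z‖ - 2 * ρ) / 2 := ⟨_, rfl⟩
    have htr : ‖p‖ < t := by rw [htd]; linarith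
    have htz : 2 * ρ < ‖z‖ - t := by rw [htd]; linarith
    have ht0 : 0 < t := hr0.trans htr
    obtain ⟨w, hwdef⟩ : ∃ w : EuclideanSpace ℝ (Fin n),
        w = t • ((‖p‖⁻¹ : ℝ) • p) := ⟨_, rfl⟩
    have hwΩ : w ∉ Ω := by rw [hwdef]; exact hray p hpΩ t htr
    have hwnorm : ‖w‖ = t := by
      have h1 : ‖(‖p‖⁻¹ : ℝ) • p‖ = 1 := norm_smul_inv_norm hp0
      rw [hwdef, norm_smul, h1, mul_one, Real.norm_eq_abs, abs_of_pos ht0]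
    have hzw : z - w ≠ 0 := by
      intro h
      rw [sub_eq_zero.mp h, hwnorm] at htz
      linarith
    obtain ⟨d, hd⟩ : ∃ d : ℝ, d = ‖z - w‖ := ⟨_, rfl⟩
    have hd0 : 0 < d := by rw [hd]; exact norm_pos_iff.mpr hzw
    obtain ⟨ν', hν'⟩ : ∃ v : EuclideanSpace ℝ (Fin n), v = (d⁻¹ : ℝ) • (z - w) := ⟨_, rfl⟩
    have hν'norm : ‖ν'‖ = 1 := by rw [hν', hd]; exact norm_smul_inv_norm hzw
    have hν'ν' : ⟪ν', ν'⟫ = 1 := by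
      rw [real_inner_self_eq_norm_sq, hν'norm]; norm_num
    obtain ⟨I, hI⟩ : ∃ I : ℝ, I = ⟪z, w⟫ := ⟨_, rfl⟩
    obtain ⟨s', hs'⟩ : ∃ s : ℝ, s = ⟪z, ν'⟫ - d / 2 := ⟨_, rfl⟩
    have hinner : ⟪z, ν'⟫ = d⁻¹ * (‖z‖ ^ 2 - I) := by
      rw [hν', real_inner_smul_right, inner_sub_right, real_inner_self_eq_norm_sq, hI]
    have hdsq : d ^ 2 = ‖z‖ ^ 2 - 2 * I + t ^ 2 := by
      rw [hd, norm_sub_sq_real, hwnorm, hI]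
    have hkey : 2 * d * s' = ‖z‖ ^ 2 - t ^ 2 := by
      rw [hs', hinner]
      have hdne : d ≠ 0 := hd0.ne'
      field_simp
      nlinarith [hdsq]
    have hdle : d ≤ ‖z‖ + t := by
      rw [hd]
      calc ‖z - w‖ ≤ ‖z‖ + ‖w‖ := norm_sub_le z w
        _ = ‖z‖ + t := by rw [hwnorm]
    have hρs' : ρ < s' := by nlinarith
    have hzs' : s' < ⟪z, ν'⟫ := by rw [hs']; linarith
    have hmem : z ∈ Ω ∩ {x | s' < ⟪x, ν'⟫} := ⟨hz, hzs'⟩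
    have himg := hrefl2 ν' hν'norm s' hρs' (mem_image_of_mem _ hmem)
    have hcalc : z - (2 * ⟪z - s' • ν', ν'⟫) • ν' = w := by
      rw [inner_sub_left, real_inner_smul_left, hν'ν', mul_one]
      rw [show 2 * (⟪z, ν'⟫ - s') = d by rw [hs']; ring]
      rw [hν', smul_smul, hd, mul_inv_cancel₀ (hd ▸ hd0.ne' : ‖z - w‖ ≠ 0), one_smul]
      abel
    rw [hcalc] at himg
    exact hwΩ himg.1
  -- frontier is nonempty
  have h0Ω : (0 : EuclideanSpace ℝ (Fin n)) ∈ Ω := hball (mem_closedBall_self hρ.le)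
  obtain ⟨Rb, hRb⟩ := hbdd.subset_closedBall 0
  have hfrne : (frontier Ω).Nonempty := by
    rw [nonempty_frontier_iff]
    constructor
    · exact ⟨0, h0Ω⟩
    · intro h
      set e : EuclideanSpace ℝ (Fin n) := EuclideanSpace.single (⟨0, by omega⟩ : Fin n) (|Rb| + 1) with he
      have hen : ‖e‖ = |Rb| + 1 := by
        rw [he, EuclideanSpace.norm_single, Real.norm_eq_abs, abs_of_pos (by positivity)]
      have heΩ : e ∈ Ω := h ▸ mem_univ e
      have := hRb heΩ
      rw [mem_closedBall_zero_iff, hen] at this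
      have : |Rb| ≤ Rb := by linarith
      have := le_abs_self Rb
      have := abs_nonneg Rb
      linarith [neg_abs_le Rb]
  -- frontier points are outside Ω (Ω open)
  have hfr_out : ∀ p ∈ frontier Ω, p ∉ Ω := by
    intro p hp
    rw [hopen.frontier_eq] at hp
    exact hp.2
  -- every frontier point q satisfies ‖q‖ ≤ ‖p‖ + 2ρ for every frontier point p
  have hbound : ∀ p ∈ frontier Ω, ∀ q ∈ frontier Ω, ‖q‖ ≤ ‖p‖ + 2 * ρ := by
    intro p hp q hq
    have hq' : q ∈ closure Ω := hq.1
    have hcl : closure Ω ⊆ closedBall 0 (‖p‖ + 2 * ρ) := by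
      apply closure_minimal _ isClosed_closedBall
      intro z hz
      rw [mem_closedBall_zero_iff]
      exact hmain p (hfr_out p hp) z hz
    exact mem_closedBall_zero_iff.mp (hcl hq')
  set A : Set ℝ := (fun x => ‖x‖) '' frontier Ω with hA
  have hAne : A.Nonempty := hfrne.image _
  -- sSup A ≤ a + 2ρ for every a ∈ A
  have hsup : ∀ a ∈ A, sSup A ≤ a + 2 * ρ := by
    rintro a ⟨p, hp, rfl⟩
    apply csSup_le hAne
    rintro b ⟨q, hq, rfl⟩
    exact hbound p hp q hq
  have hinf : sSup A - 2 * ρ ≤ sInf A := by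
    apply le_csInf hAne
    rintro a ha
    linarith [hsup a ha]
  linarith [hinf]
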